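/- For every complex s with Re(s) > 1, ∫_{0}^{1/2} (1 + f(1/x)) · x^{s-1} dx = 0, where f(x) = ∑_{k≥1} μ(k) ν(x/k). -/

import Mathlib

open MeasureTheory

noncomputable def nu (t : ℝ) : ℝ := Int.fract (t/2) + 1/2 - Int.fract (t/2 + 1/2)

noncomputable def f (x : ℝ) : ℝ :=
  ∑ k ∈ Finset.Icc 1 ⌊x⌋₊, (ArithmeticFunction.moebius k : ℝ) * nu (x / k)

open ArithmeticFunction in
lemma sum_moebius_divisors (m : ℕ) : ∑ d ∈ m.divisors, (moebius d : ℤ)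
    = if m = 1 then 1 else 0 := by
  rw [← coe_mul_zeta_apply, moebius_mul_coe_zeta, one_apply]

open ArithmeticFunction in
lemma key_sum (n : ℕ) (hn : 1 ≤ n) :
    ∑ k ∈ Finset.Icc 1 n, (moebius k : ℤ) * (n / k : ℕ) = 1 := by
  have h1 : ∀ k ∈ Finset.Icc 1 n, (moebius k : ℤ) * (n / k : ℕ)
      = ∑ m ∈ Finset.Icc 1 n, if k ∣ m then (moebius k : ℤ) else 0 := by
    intro k _
    rw [← Finset.sum_filter]
    have : (Finset.Icc 1 n).filter (k ∣ ·) = (Finset.Ioc 0 n).filter (k ∣ ·) := by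
      congr 1
    rw [this]
    have hcard := Nat.Ioc_filter_dvd_card_eq_div n k
    rw [Finset.sum_const, hcard]
    simp [mul_comm]
  rw [Finset.sum_congr rfl h1, Finset.sum_comm]
  have h2 : ∀ m ∈ Finset.Icc 1 n,
      (∑ k ∈ Finset.Icc 1 n, if k ∣ m then (moebius k : ℤ) else 0)
      = if m = 1 then 1 else 0 := by
    intro m hm
    simp only [Finset.mem_Icc] at hm
    rw [← Finset.sum_filter]
    have : (Finset.Icc 1 n).filter (· ∣ m) = m.divisors := by
      ext k
      simp only [Finset.mem_filter, Finset.mem_Icc, Nat.mem_divisors]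
      constructor
      · rintro ⟨⟨h1k, _⟩, hkm⟩; exact ⟨hkm, by omega⟩
      · rintro ⟨hkm, hm0⟩
        have hk0 : 0 < k := Nat.pos_of_dvd_of_pos hkm (by omega)
        exact ⟨⟨hk0, le_trans (Nat.le_of_dvd (by omega) hkm) hm.2⟩, hkm⟩
    rw [this]
    exact sum_moebius_divisors m
  rw [Finset.sum_congr rfl h2]
  rw [Finset.sum_ite_eq' (Finset.Icc 1 n) 1 (fun _ => (1:ℤ))]
  simp [hn]

lemma nu_eq (t : ℝ) : nu t = (⌊t⌋ : ℝ) - 2 * (⌊t/2⌋ : ℝ) := by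
  have key : ⌊t/2 + 1/2⌋ = ⌊t⌋ - ⌊t/2⌋ := by
    set m := ⌊t/2⌋ with hm
    have h1 : (m : ℝ) ≤ t/2 := Int.floor_le _
    have h2 : t/2 < m + 1 := Int.lt_floor_add_one _
    rcases lt_or_ge (t/2) (m + 1/2) with h | h
    · have hf1 : ⌊t/2 + 1/2⌋ = m := by
        rw [Int.floor_eq_iff]; constructor <;> push_cast <;> linarith
      have hf2 : ⌊t⌋ = 2 * m := by
        rw [Int.floor_eq_iff]; constructor <;> push_cast <;> linarith
      omega
    · have hf1 : ⌊t/2 + 1/2⌋ = m + 1 := by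
        rw [Int.floor_eq_iff]; constructor <;> push_cast <;> linarith
      have hf2 : ⌊t⌋ = 2 * m + 1 := by
        rw [Int.floor_eq_iff]; constructor <;> push_cast <;> linarith
      omega
  unfold nu
  rw [Int.fract, Int.fract, key]
  push_cast
  ring

lemma f_eq_neg_one {x : ℝ} (hx : 2 ≤ x) : f x = -1 := by
  set N := ⌊x⌋₊ with hN
  have hx0 : (0:ℝ) ≤ x := by linarith
  have hN2 : 2 ≤ N := Nat.le_floor (by exact_mod_cast hx)
  have step : ∀ k ∈ Finset.Icc 1 N, (ArithmeticFunction.moebius k : ℝ) * nu (x / k)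
      = ((ArithmeticFunction.moebius k : ℤ) * (N / k : ℕ)
        - 2 * ((ArithmeticFunction.moebius k : ℤ) * (N / (k * 2) : ℕ)) : ℤ) := by
    intro k hk
    simp only [Finset.mem_Icc] at hk
    have hk0 : (0:ℝ) < k := by exact_mod_cast hk.1
    have hxk : (0:ℝ) ≤ x / k := div_nonneg hx0 hk0.le
    have e1 : ⌊x / k⌋ = ((N / k : ℕ) : ℤ) := by
      rw [← Int.natCast_floor_eq_floor hxk, Nat.floor_div_natCast]
    have e2 : ⌊x / k / 2⌋ = ((N / (k * 2) : ℕ) : ℤ) := by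
      have : x / k / 2 = x / (k * 2 : ℕ) := by push_cast; ring
      rw [this, ← Int.natCast_floor_eq_floor (div_nonneg hx0 (by positivity)),
        Nat.floor_div_natCast]
    rw [nu_eq, e1, e2]
    push_cast
    ring
  rw [f, Finset.sum_congr rfl step, ← Int.cast_sum]
  rw [Finset.sum_sub_distrib, ← Finset.mul_sum]
  have hdd : ∀ k ∈ Finset.Icc 1 N, (ArithmeticFunction.moebius k : ℤ) * (N / (k * 2) : ℕ)
      = (ArithmeticFunction.moebius k : ℤ) * ((N / 2) / k : ℕ) := by
    intro k _
    rw [Nat.div_div_eq_div_mul, Nat.mul_comm]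
  rw [Finset.sum_congr rfl hdd]
  have hsub : ∑ k ∈ Finset.Icc 1 N, (ArithmeticFunction.moebius k : ℤ) * ((N / 2) / k : ℕ)
      = ∑ k ∈ Finset.Icc 1 (N / 2), (ArithmeticFunction.moebius k : ℤ) * ((N / 2) / k : ℕ) := by
    symm
    apply Finset.sum_subset
    · apply Finset.Icc_subset_Icc_right
      exact Nat.div_le_self N 2
    · intro k hk hk'
      simp only [Finset.mem_Icc] at hk hk'
      have : N / 2 < k := by omega
      rw [Nat.div_eq_of_lt this]
      simp
  rw [hsub, key_sum N (by omega), key_sum (N / 2) (by omega)]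
  norm_num

theorem stmt11 : ∀ s : ℂ, 1 < s.re →
    ∫ x in (0:ℝ)..(1/2), (1 + (f (1/x) : ℂ)) * (x:ℂ)^(s - 1) = 0 := by
  intro s hs
  have h : Set.EqOn (fun x : ℝ => (1 + (f (1/x) : ℂ)) * (x:ℂ)^(s - 1)) 0
      (Set.uIcc (0:ℝ) (1/2)) := by
    intro x hx
    rw [Set.uIcc_of_le (by norm_num)] at hx
    obtain ⟨hx0, hx1⟩ := hx
    rcases eq_or_lt_of_le hx0 with h0 | h0
    · simp only [← h0, Pi.zero_apply]
      rw [Complex.ofReal_zero, Complex.zero_cpow (by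
        intro hc
        have : s = 1 := by linear_combination hc
        rw [this] at hs; norm_num at hs), mul_zero]
    · have : (2:ℝ) ≤ 1 / x := by
        rw [le_div_iff₀ h0]; linarith
      simp only [Pi.zero_apply, f_eq_neg_one this]
      norm_num
  rw [intervalIntegral.integral_congr h]
  simp
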